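/- With the Poisson structure on Hom(V_1,V_2) ⊕ Hom(V_2,V_1) as above, the functions β_t(f, g) = Tr((f ∘ g)^t), t ≥ 1, are pairwise Poisson commutative: {β_t, β_{t'}} = 0 for all t, t'. -/

import Mathlib

private lemma bsum_l {A : Type*} [CommRing A] (B : A → A → A)
    (haddl : ∀ a b c, B (a + b) c = B a c + B b c)
    (h0B : ∀ a, B 0 a = 0)
    {ι : Type*} (s : Finset ι) (f : ι → A) (a : A) :
    B (∑ i ∈ s, f i) a = ∑ i ∈ s, B (f i) a := by
  classical
  induction s using Finset.induction with
  | empty => simp [h0B]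
  | insert _ _ h ih => simp [Finset.sum_insert h, haddl, ih]

private lemma bsum_r {A : Type*} [CommRing A] (B : A → A → A)
    (haddr : ∀ a b c, B a (b + c) = B a b + B a c)
    (hB0 : ∀ a, B a 0 = 0)
    {ι : Type*} (s : Finset ι) (f : ι → A) (a : A) :
    B a (∑ i ∈ s, f i) = ∑ i ∈ s, B a (f i) := by
  classical
  induction s using Finset.induction with
  | empty => simp [hB0]
  | insert _ _ h ih => simp [Finset.sum_insert h, haddr, ih]

private lemma ite_one_sub {A : Type*} [CommRing A] {ι : Type*} [DecidableEq ι]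
    (i j k l : ι) :
    ((if j = k then (if i = l then (1:A) else 0) else 0)
      - (if l = i then (if k = j then (1:A) else 0) else 0)) = 0 := by
  split_ifs <;> simp_all

/-- With the canonical Poisson structure on `Hom(V₁,V₂) ⊕ Hom(V₂,V₁)`, the power traces
`β_t = Tr((f ∘ g)^t)` are pairwise Poisson commutative. -/
theorem stmt10 (A : Type*) [CommRing A]
    (ι₁ ι₂ : Type*) [Fintype ι₁] [DecidableEq ι₁] [Fintype ι₂] [DecidableEq ι₂]
    (B : A → A → A)
    (haddl : ∀ a b c, B (a + b) c = B a c + B b c)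
    (hskew : ∀ a b, B a b = - B b a)
    (hleib : ∀ a b c, B a (b * c) = B a b * c + b * B a c)
    (F : ι₂ → ι₁ → A) (G : ι₁ → ι₂ → A)
    (hFF : ∀ i k : ι₂, ∀ j l : ι₁, B (F i j) (F k l) = 0)
    (hGG : ∀ i k : ι₁, ∀ j l : ι₂, B (G i j) (G k l) = 0)
    (hGF : ∀ (c : ι₁) (d : ι₂) (a : ι₂) (b : ι₁),
      B (G c d) (F a b) = if d = a ∧ c = b then 1 else 0)
    (H : Matrix ι₂ ι₂ A) (hH : ∀ i j, H i j = ∑ b, F i b * G b j) :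
    ∀ t t' : ℕ, B ((H ^ t).trace) ((H ^ t').trace) = 0 := by
  have haddr : ∀ a b c, B a (b + c) = B a b + B a c := by
    intro a b c
    rw [hskew, haddl, hskew b a, hskew c a]; ring
  have hB0 : ∀ a, B a 0 = 0 := by
    intro a
    have h := haddr a 0 0
    rw [add_zero] at h
    exact (left_eq_add.mp h)
  have h0B : ∀ a, B 0 a = 0 := by
    intro a; rw [hskew, hB0, neg_zero]
  have hB1 : ∀ a, B a 1 = 0 := by
    intro a
    have h := hleib a 1 1
    rw [mul_one, mul_one, one_mul] at h
    exact (left_eq_add.mp h)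
  have h1B : ∀ a, B 1 a = 0 := by
    intro a; rw [hskew, hB1, neg_zero]
  have hleibl : ∀ a b c, B (a * b) c = B a c * b + a * B b c := by
    intro a b c
    rw [hskew, hleib, hskew c a, hskew c b]; ring
  have hFG : ∀ (a : ι₂) (b : ι₁) (c : ι₁) (d : ι₂),
      B (F a b) (G c d) = - (if d = a ∧ c = b then 1 else 0) := by
    intro a b c d; rw [hskew, hGF]
  -- the fundamental bracket relation for H
  have hHH : ∀ i j k l, B (H i j) (H k l)
      = (if j = k then H i l else 0) - (if l = i then H k j else 0) := by
    intro i j k l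
    rw [hH i j, hH k l]
    rw [bsum_l B haddl h0B]
    have step : ∀ b, B (F i b * G b j) (∑ c, F k c * G c l)
        = (if j = k then F i b * G b l else 0)
          - (if l = i then F k b * G b j else 0) := by
      intro b
      rw [bsum_r B haddr hB0]
      have term : ∀ c, B (F i b * G b j) (F k c * G c l)
          = (if j = k ∧ b = c then F i b * G c l else 0)
            - (if l = i ∧ c = b then F k c * G b j else 0) := by
        intro c
        rw [hleibl, hleib, hleib, hFF, hGG, hFG, hGF]
        split_ifs <;> ring
      simp only [term]
      rw [Finset.sum_sub_distrib]
      congr 1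
      · by_cases h1 : j = k <;> simp [h1, Finset.sum_ite_eq]
      · by_cases h3 : l = i <;> simp [h3, Finset.sum_ite_eq']
    simp only [step]
    rw [Finset.sum_sub_distrib]
    congr 1
    · by_cases h1 : j = k <;> simp [h1, hH, Finset.mul_sum]
    · by_cases h3 : l = i <;> simp [h3, hH, Finset.mul_sum]
  -- bracket of H with entries of powers of H
  have key : ∀ (m : ℕ) i j k l, B (H i j) ((H ^ m) k l)
      = (if j = k then (H ^ m) i l else 0) - (if l = i then (H ^ m) k j else 0) := by
    intro m
    induction m with
    | zero =>
      intro i j k l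
      simp only [pow_zero, Matrix.one_apply]
      rcases eq_or_ne k l with h1 | h1
      · rw [if_pos h1, hB1]
        exact (ite_one_sub i j k l).symm
      · rw [if_neg h1, hB0]
        exact (ite_one_sub i j k l).symm
    | succ m ih =>
      intro i j k l
      have hmul : ∀ (k l : ι₂), (H ^ (m + 1)) k l = ∑ c, (H ^ m) k c * H c l := by
        intro k l; rw [pow_succ, Matrix.mul_apply]
      rw [hmul, bsum_r B haddr hB0]
      have term : ∀ c, B (H i j) ((H ^ m) k c * H c l)
          = ((if j = k then (H ^ m) i c else 0) - (if c = i then (H ^ m) k j else 0)) * H c l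
            + (H ^ m) k c * ((if j = c then H i l else 0) - (if l = i then H c j else 0)) := by
        intro c; rw [hleib, ih, hHH]
      simp only [term]
      rw [Finset.sum_add_distrib]
      have e1 : ∑ c, ((if j = k then (H ^ m) i c else 0) - (if c = i then (H ^ m) k j else 0)) * H c l
          = (if j = k then (H ^ (m+1)) i l else 0) - (H ^ m) k j * H i l := by
        simp only [sub_mul, Finset.sum_sub_distrib]
        congr 1
        · by_cases h1 : j = k <;> simp [h1, hmul]
        · simp [ite_mul, Finset.sum_ite_eq']
      have e2 : ∑ c, (H ^ m) k c * ((if j = c then H i l else 0) - (if l = i then H c j else 0))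
          = (H ^ m) k j * H i l - (if l = i then (H ^ (m+1)) k j else 0) := by
        simp only [mul_sub, Finset.sum_sub_distrib]
        congr 1
        · simp [mul_ite, Finset.sum_ite_eq]
        · by_cases h3 : l = i <;> simp [h3, hmul]
      rw [e1, e2]; ring
  -- H entries bracket-commute with traces of powers
  have keytr : ∀ (m : ℕ) i j, B (H i j) ((H ^ m).trace) = 0 := by
    intro m i j
    rw [Matrix.trace]
    rw [bsum_r B haddr hB0]
    simp only [Matrix.diag_apply, key]
    rw [Finset.sum_sub_distrib]
    simp [Finset.sum_ite_eq, Finset.sum_ite_eq']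
  -- entries of powers bracket-commute with traces of powers
  have key2 : ∀ (t : ℕ) (k l : ι₂) (m : ℕ), B ((H ^ t) k l) ((H ^ m).trace) = 0 := by
    intro t
    induction t with
    | zero =>
      intro k l m
      simp only [pow_zero, Matrix.one_apply]
      by_cases h : k = l <;> simp [h, h1B, h0B]
    | succ t ih =>
      intro k l m
      rw [pow_succ, Matrix.mul_apply, bsum_l B haddl h0B]
      simp [hleibl, ih, keytr]
  intro t t'
  rw [Matrix.trace, bsum_l B haddl h0B]
  simp [Matrix.diag_apply, key2]
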